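/- The cubic curve in ℙ² defined by C(y,z,t) = z(y + b₂t)² - 2b₂t(y + b₂t)(z - t) - (z + b₁t)(z - t)² is irreducible provided b₁ + 2b₂ ≠ 0 and b₁ - 2b₂ ≠ 0, and it has a singular point at (y : z : t) = (-b₂ : 1 : 1). -/

import Mathlib

open MvPolynomial

noncomputable abbrev Stmt13.RR := MvPolynomial (Fin 2) ℂ

namespace Stmt13

lemma primeX0 : Prime (X 0 : RR) := by
  rw [← MulEquiv.prime_iff (finSuccEquiv ℂ 1).toMulEquiv]
  show Prime (finSuccEquiv ℂ 1 (X 0))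
  rw [finSuccEquiv_X_zero]
  exact Polynomial.prime_X

lemma fse_C (b : ℂ) : finSuccEquiv ℂ 2 (C b) = Polynomial.C (C b) := by
  simp [finSuccEquiv_apply]

lemma fse_X1 : finSuccEquiv ℂ 2 (X 1) = Polynomial.C (X 0 : RR) := by
  have : (1 : Fin 3) = Fin.succ 0 := rfl
  rw [this, finSuccEquiv_X_succ]

lemma fse_X2 : finSuccEquiv ℂ 2 (X 2) = Polynomial.C (X 1 : RR) := by
  have : (2 : Fin 3) = Fin.succ 1 := rfl
  rw [this, finSuccEquiv_X_succ]

lemma fse_main (b₁ b₂ : ℂ) :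
    finSuccEquiv ℂ 2 ((X 1)*(X 0 + C b₂*X 2)^2 - 2*C b₂*X 2*(X 0 + C b₂*X 2)*(X 1 - X 2)
        - (X 1 + C b₁*X 2)*(X 1 - X 2)^2 : MvPolynomial (Fin 3) ℂ)
      = Polynomial.C (X 0 : RR) * Polynomial.X^2
        + Polynomial.C (2*C b₂*(X 1:RR)^2) * Polynomial.X
        + Polynomial.C (C b₂^2*(X 1:RR)^2*(2*X 1 - X 0)
            - ((X 0:RR) + C b₁*X 1)*((X 0:RR) - X 1)^2) := by
  simp only [map_sub, map_mul, map_add, map_pow, map_ofNat, fse_C, fse_X1, fse_X2,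
    finSuccEquiv_X_zero, Polynomial.C_mul, Polynomial.C_add, Polynomial.C_sub, Polynomial.C_pow,
    map_ofNat]
  ring

lemma no_const_factor (b₁ b₂ : ℂ) (h₁ : b₁ + 2*b₂ ≠ 0) {r : RR} (hru : ¬IsUnit r)
    (hdZ : r ∣ X 0) (hdM : r ∣ 2*C b₂*X 1^2)
    (hdD : r ∣ (C b₂^2*X 1^2*(2*X 1 - X 0) - (X 0 + C b₁*X 1)*(X 0 - X 1)^2)) : False := by
  obtain ⟨s, hs⟩ := hdZ
  rcases (primeX0.irreducible.isUnit_or_isUnit hs) with h | h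
  · exact hru h
  · have hZr : (X 0 : RR) ∣ r := by
      obtain ⟨u, rfl⟩ := h
      exact ⟨↑u⁻¹, by rw [hs, mul_assoc]; simp⟩
    obtain ⟨m, hm⟩ := hZr.trans hdM
    have := congrArg (eval ![(0:ℂ), 1]) hm
    simp at this
    have hb₂ : b₂ = 0 := by simpa using this
    obtain ⟨d, hd⟩ := hZr.trans hdD
    have := congrArg (eval ![(0:ℂ), 1]) hd
    simp [hb₂] at this
    exact h₁ (by simp [hb₂, this])

lemma sq_coeffs (u v : ℂ) (p : Polynomial ℂ)
    (hp : p * p = Polynomial.C 4 * Polynomial.X^4 + Polynomial.C u * Polynomial.X^3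
      + Polynomial.C v * Polynomial.X^2) : u^2 = 16*v := by
  have hp0 : p ≠ 0 := by
    rintro rfl
    have := congrArg (fun q => Polynomial.coeff q 4) hp
    simp [Polynomial.coeff_add, Polynomial.coeff_C_mul, Polynomial.coeff_X_pow] at this
  have hdle : p.natDegree ≤ 2 := by
    have h1 : (p*p).natDegree = p.natDegree + p.natDegree := Polynomial.natDegree_mul hp0 hp0
    have h2 : (p*p).natDegree ≤ 4 := by rw [hp]; compute_degree
    omega
  have hc3 : p.coeff 3 = 0 := Polynomial.coeff_eq_zero_of_natDegree_lt (by omega)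
  have hc4 : p.coeff 4 = 0 := Polynomial.coeff_eq_zero_of_natDegree_lt (by omega)
  have e0 := congrArg (fun q => Polynomial.coeff q 0) hp
  have e2 := congrArg (fun q => Polynomial.coeff q 2) hp
  have e3 := congrArg (fun q => Polynomial.coeff q 3) hp
  have e4 := congrArg (fun q => Polynomial.coeff q 4) hp
  simp only [Polynomial.coeff_mul, Finset.Nat.sum_antidiagonal_eq_sum_range_succ_mk,
    Finset.sum_range_succ, Finset.sum_range_zero, Polynomial.coeff_add,
    Polynomial.coeff_C_mul, Polynomial.coeff_X_pow, hc3, hc4] at e0 e2 e3 e4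
  norm_num at e0 e2 e3 e4
  have hc0 : p.coeff 0 = 0 := e0
  rw [hc0] at e2
  have hsq : (p.coeff 1 * p.coeff 2 + p.coeff 2 * p.coeff 1)^2 = u^2 := by rw [e3]
  linear_combination -hsq + 4*(p.coeff 1)^2 * e4 + 16 * e2

lemma no_sqrt (b₁ b₂ : ℂ) (h₁ : b₁ + 2*b₂ ≠ 0) (h₂ : b₁ - 2*b₂ ≠ 0) (w : RR)
    (hw : w^2 = 4*((X 0 : RR) - X 1)^2 *
      ((X 0:RR)^2 + C b₁ * X 1 * X 0 + C b₂^2 * (X 1:RR)^2)) : False := by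
  set ψ : RR →ₐ[ℂ] Polynomial ℂ := aeval ![Polynomial.X + 1, 1] with hψ
  have hp := congrArg ψ hw
  simp only [map_mul, map_pow, map_add, map_sub, map_ofNat, hψ, aeval_X, aeval_C,
    Polynomial.algebraMap_eq, Matrix.cons_val_zero, Matrix.cons_val_one, Matrix.head_cons] at hp
  have hp2 : ψ w * ψ w = Polynomial.C 4 * Polynomial.X^4
      + Polynomial.C (4*(2+b₁)) * Polynomial.X^3
      + Polynomial.C (4*(1+b₁+b₂^2)) * Polynomial.X^2 := by
    rw [← pow_two, hp]
    simp only [Polynomial.C_mul, Polynomial.C_add, Polynomial.C_pow, Polynomial.C_1,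
      map_ofNat]
    ring
  have := sq_coeffs _ _ _ hp2
  have key : (b₁ - 2*b₂) * (b₁ + 2*b₂) = 0 := by linear_combination (1/16 : ℂ) * this
  rcases mul_eq_zero.mp key with h | h
  · exact h₂ h
  · exact h₁ h

lemma quad_irr (b₁ b₂ : ℂ) (h₁ : b₁ + 2*b₂ ≠ 0) (h₂ : b₁ - 2*b₂ ≠ 0) :
    Irreducible (Polynomial.C (X 0 : RR) * Polynomial.X^2
        + Polynomial.C (2*C b₂*(X 1:RR)^2) * Polynomial.X
        + Polynomial.C (C b₂^2*(X 1:RR)^2*(2*X 1 - X 0)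
            - ((X 0:RR) + C b₁*X 1)*((X 0:RR) - X 1)^2)) := by
  set M : RR := 2*C b₂*(X 1:RR)^2 with hM
  set D : RR := C b₂^2*(X 1:RR)^2*(2*X 1 - X 0) - ((X 0:RR) + C b₁*X 1)*((X 0:RR) - X 1)^2
    with hD
  set P : Polynomial RR := Polynomial.C (X 0 : RR) * Polynomial.X^2
      + Polynomial.C M * Polynomial.X + Polynomial.C D with hP
  have hdeg : P.natDegree = 2 := Polynomial.natDegree_quadratic (X_ne_zero 0)
  have hPne : P ≠ 0 := fun h => by simp [h] at hdeg
  have hcoeff : P.coeff 2 = X 0 ∧ P.coeff 1 = M ∧ P.coeff 0 = D := by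
    refine ⟨?_, ?_, ?_⟩ <;>
      simp [hP, Polynomial.coeff_add, Polynomial.coeff_C_mul, Polynomial.coeff_X_pow,
        Polynomial.coeff_C, Polynomial.coeff_X]
  obtain ⟨hco2, hco1, hco0⟩ := hcoeff
  constructor
  · intro hu
    have := Polynomial.natDegree_eq_zero_of_isUnit hu
    omega
  · rintro f g hfg
    by_contra hng
    push_neg at hng
    obtain ⟨hfu, hgu⟩ := hng
    have hf0 : f ≠ 0 := fun h => hPne (by rw [hfg, h, zero_mul])
    have hg0 : g ≠ 0 := fun h => hPne (by rw [hfg, h, mul_zero])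
    have hadd : f.natDegree + g.natDegree = 2 := by
      rw [← Polynomial.natDegree_mul hf0 hg0, ← hfg, hdeg]
    have hcase : f.natDegree = 0 ∨ g.natDegree = 0 ∨ (f.natDegree = 1 ∧ g.natDegree = 1) := by
      omega
    rcases hcase with h0 | h0 | ⟨hf1, hg1⟩
    · have hfc : f = Polynomial.C (f.coeff 0) := Polynomial.eq_C_of_natDegree_eq_zero h0
      have hru : ¬IsUnit (f.coeff 0) := fun h => hfu (hfc ▸ (Polynomial.isUnit_C).mpr h)
      have hdvd : ∀ i, f.coeff 0 ∣ P.coeff i := fun i =>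
        ⟨g.coeff i, by rw [hfg, hfc]; simp [Polynomial.coeff_C_mul]⟩
      have dZ : f.coeff 0 ∣ (X 0 : RR) := hco2 ▸ hdvd 2
      have dM : f.coeff 0 ∣ M := hco1 ▸ hdvd 1
      have dD : f.coeff 0 ∣ D := hco0 ▸ hdvd 0
      rw [hM] at dM; rw [hD] at dD
      exact no_const_factor b₁ b₂ h₁ hru dZ dM dD
    · have hfc : g = Polynomial.C (g.coeff 0) := Polynomial.eq_C_of_natDegree_eq_zero h0
      have hru : ¬IsUnit (g.coeff 0) := fun h => hgu (hfc ▸ (Polynomial.isUnit_C).mpr h)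
      have hdvd : ∀ i, g.coeff 0 ∣ P.coeff i := fun i =>
        ⟨f.coeff i, by rw [hfg, mul_comm, hfc]; simp [Polynomial.coeff_C_mul]⟩
      have dZ : g.coeff 0 ∣ (X 0 : RR) := hco2 ▸ hdvd 2
      have dM : g.coeff 0 ∣ M := hco1 ▸ hdvd 1
      have dD : g.coeff 0 ∣ D := hco0 ▸ hdvd 0
      rw [hM] at dM; rw [hD] at dD
      exact no_const_factor b₁ b₂ h₁ hru dZ dM dD
    · obtain ⟨a, b, hab⟩ := Polynomial.exists_eq_X_add_C_of_natDegree_le_one (le_of_eq hf1)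
      obtain ⟨c, d, hcd⟩ := Polynomial.exists_eq_X_add_C_of_natDegree_le_one (le_of_eq hg1)
      have hexp : P = Polynomial.C (a*c) * Polynomial.X^2
          + Polynomial.C (a*d + b*c) * Polynomial.X + Polynomial.C (b*d) := by
        rw [hfg, hab, hcd]
        simp only [Polynomial.C_mul, Polynomial.C_add]
        ring
      have e2 : (X 0 : RR) = a*c := by
        have := congrArg (fun q => Polynomial.coeff q 2) hexp
        simpa [Polynomial.coeff_add, Polynomial.coeff_C_mul, Polynomial.coeff_X_pow,
          Polynomial.coeff_C, mul_assoc, hco2] using this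
      have e1 : M = a*d + b*c := by
        have := congrArg (fun q => Polynomial.coeff q 1) hexp
        simpa [Polynomial.coeff_add, Polynomial.coeff_C_mul, Polynomial.coeff_X_pow,
          Polynomial.coeff_C, mul_assoc, hco1] using this
      have e0 : D = b*d := by
        have := congrArg (fun q => Polynomial.coeff q 0) hexp
        simpa [Polynomial.coeff_add, Polynomial.coeff_C_mul, Polynomial.coeff_X_pow,
          Polynomial.coeff_C, mul_assoc, hco0] using this
      rw [hM] at e1; rw [hD] at e0
      refine no_sqrt b₁ b₂ h₁ h₂ (a*d - b*c) ?_
      linear_combination (-(2*C b₂*(X 1:RR)^2 + a*d + b*c)) * e1 + 4*(b*d)*e2 + 4*(X 0 : RR)*e0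

end Stmt13

/-- The cubic
`C = z(y + b₂t)² - 2b₂t(y + b₂t)(z - t) - (z + b₁t)(z - t)²` in `ℂ[y,z,t]`
is irreducible provided `b₁ + 2b₂ ≠ 0` and `b₁ - 2b₂ ≠ 0`, and has a singular
point at `(y : z : t) = (-b₂ : 1 : 1)`. -/
theorem stmt13 (b₁ b₂ : ℂ) (h₁ : b₁ + 2*b₂ ≠ 0) (h₂ : b₁ - 2*b₂ ≠ 0) :
    let y : MvPolynomial (Fin 3) ℂ := X 0
    let z : MvPolynomial (Fin 3) ℂ := X 1
    let t : MvPolynomial (Fin 3) ℂ := X 2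
    let Cb : MvPolynomial (Fin 3) ℂ :=
      z*(y + C b₂*t)^2 - 2*C b₂*t*(y + C b₂*t)*(z - t) - (z + C b₁*t)*(z - t)^2
    let p : Fin 3 → ℂ := ![-b₂, 1, 1]
    Irreducible Cb ∧ eval p Cb = 0 ∧
      eval p (pderiv 0 Cb) = 0 ∧ eval p (pderiv 1 Cb) = 0 ∧
      eval p (pderiv 2 Cb) = 0 := by
  intro y z t Cb p
  refine ⟨?_, ?_, ?_, ?_, ?_⟩
  · have hirr : Irreducible (finSuccEquiv ℂ 2 Cb) := by
      rw [show finSuccEquiv ℂ 2 Cb = _ from Stmt13.fse_main b₁ b₂]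
      exact Stmt13.quad_irr b₁ b₂ h₁ h₂
    exact (MulEquiv.irreducible_iff (finSuccEquiv ℂ 2).toMulEquiv).mp hirr
  all_goals
    simp [Cb, y, z, t, p, pderiv_mul, map_sub, map_add, pderiv_pow]
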